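/- On E_α : Y²+(α−2)XY+αY = X³, the divisor of αX+2Y+α² is (5P)+(U)+(P−U)−3(O), where 5P = (α,−α²) and U, P−U are the two points with X-coordinate α(−α±√(α²−16α+32))/8. -/

import Mathlib

open scoped Polynomial.Bivariate nonZeroDivisors
open WeierstrassCurve WeierstrassCurve.Affine WeierstrassCurve.Affine.CoordinateRing Polynomial

/-- On `E_α : Y²+(α−2)XY+αY = X³`, the divisor of `αX+2Y+α²` is `(5P)+(U)+(P−U)−3(O)`,
where `5P = (α,−α²)` and `U`, `P−U` are the two points with `X`-coordinate
`α(−α±√(α²−16α+32))/8` (with coordinates as in the definition of `U±`).  Since the function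
`αX+2Y+α²` has poles only at `O`, its divisor is expressed as the factorization of the ideal
it generates in the affine coordinate ring into the maximal ideals of the three affine
points. -/
theorem divisor_of_line_aX_2Y_a2 (α : ℝ) (hα0 : α ≠ 0) (hα1 : α ≠ -1)
    (h16 : 0 < α ^ 2 - 16 * α + 32)
    (W : WeierstrassCurve.Affine ℝ)
    (hW : W = { a₁ := α - 2, a₂ := 0, a₃ := α, a₄ := 0, a₆ := 0 }) :
    Ideal.span {WeierstrassCurve.Affine.CoordinateRing.mk W
        ((Polynomial.C 2 * X + C (C α * X + C (α ^ 2)) : Polynomial (Polynomial ℝ)))} =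
      XYIdeal W α (C (-α ^ 2)) *
        XYIdeal W (α * (-α + Real.sqrt (α ^ 2 - 16 * α + 32)) / 8)
          (C (α ^ 2 * (α - 8 - Real.sqrt (α ^ 2 - 16 * α + 32)) / 16)) *
        XYIdeal W (α * (-α - Real.sqrt (α ^ 2 - 16 * α + 32)) / 8)
          (C (α ^ 2 * (α - 8 + Real.sqrt (α ^ 2 - 16 * α + 32)) / 16)) := by
  have ha₁ : W.a₁ = α - 2 := by rw [hW]
  have ha₂ : W.a₂ = 0 := by rw [hW]
  have ha₃ : W.a₃ = α := by rw [hW]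
  have ha₄ : W.a₄ = 0 := by rw [hW]
  have ha₆ : W.a₆ = 0 := by rw [hW]
  set s : ℝ := Real.sqrt (α ^ 2 - 16 * α + 32) with hs_def
  have hs : s ^ 2 = α ^ 2 - 16 * α + 32 := Real.sq_sqrt h16.le
  have hs0 : s ≠ 0 := ne_of_gt (Real.sqrt_pos.mpr h16)
  have hα1' : α + 1 ≠ 0 := fun h => hα1 (by linarith)
  -- the three affine points
  have hEqU : W.Equation (α * (-α + s) / 8) (α ^ 2 * (α - 8 - s) / 16) := by
    rw [equation_iff, ha₁, ha₂, ha₃, ha₄, ha₆]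
    linear_combination ((α ^ 4 - α ^ 3 * s + 8 * α ^ 3) / 512) * hs
  have hEqV : W.Equation (α * (-α - s) / 8) (α ^ 2 * (α - 8 + s) / 16) := by
    rw [equation_iff, ha₁, ha₂, ha₃, ha₄, ha₆]
    linear_combination ((α ^ 4 + α ^ 3 * s + 8 * α ^ 3) / 512) * hs
  have h5P : W.Nonsingular α (-α ^ 2) := by
    rw [nonsingular_iff']
    constructor
    · rw [equation_iff, ha₁, ha₂, ha₃, ha₄, ha₆]; ring
    · left
      rw [ha₁, ha₂, ha₄,
        show (α - 2) * -α ^ 2 - (3 * α ^ 2 + 2 * 0 * α + 0) = -α ^ 2 * (α + 1) by ring]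
      exact mul_ne_zero (neg_ne_zero.mpr (pow_ne_zero 2 hα0)) hα1'
  have hP : W.Nonsingular α α := by
    rw [nonsingular_iff']
    constructor
    · rw [equation_iff, ha₁, ha₂, ha₃, ha₄, ha₆]; ring
    · left
      rw [ha₁, ha₂, ha₄,
        show (α - 2) * α - (3 * α ^ 2 + 2 * 0 * α + 0) = -2 * α * (α + 1) by ring]
      exact mul_ne_zero (mul_ne_zero (by norm_num) hα0) hα1'
  have hx : α * (-α + s) / 8 ≠ α * (-α - s) / 8 := by
    intro h
    have h' : α * s / 4 = 0 := by linear_combination h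
    exact mul_ne_zero hα0 hs0 (by linarith)
  have hslope : W.slope (α * (-α + s) / 8) (α * (-α - s) / 8)
      (α ^ 2 * (α - 8 - s) / 16) (α ^ 2 * (α - 8 + s) / 16) = -α / 2 := by
    rw [slope_of_X_ne hx, div_eq_iff (sub_ne_zero.mpr hx)]
    ring
  have haddX : W.addX (α * (-α + s) / 8) (α * (-α - s) / 8) (-α / 2) = α := by
    rw [addX, ha₁, ha₂]; ring
  have haddY : W.addY (α * (-α + s) / 8) (α * (-α - s) / 8)
      (α ^ 2 * (α - 8 - s) / 16) (-α / 2) = α := by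
    rw [addY, negAddY, haddX, negY, ha₁, ha₃]; ring
  have hline : linePolynomial (α * (-α + s) / 8) (α ^ 2 * (α - 8 - s) / 16) (-α / 2) =
      C (-α / 2) * X + C (-(α ^ 2 / 2)) := by
    rw [linePolynomial,
      show (C (-α / 2) * (X - C (α * (-α + s) / 8)) + C (α ^ 2 * (α - 8 - s) / 16) : ℝ[X]) =
        C (-α / 2) * X + C (α ^ 2 * (α - 8 - s) / 16 - -α / 2 * (α * (-α + s) / 8)) by
          rw [C_sub, C_mul]; ring,
      show α ^ 2 * (α - 8 - s) / 16 - -α / 2 * (α * (-α + s) / 8) = -(α ^ 2 / 2) by ring]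
  have hnegY : W.negY α (-α ^ 2) = α := by rw [negY, ha₁, ha₃]; ring
  have hneg := XYIdeal_neg_mul h5P
  rw [hnegY] at hneg
  have hmul := XYIdeal_mul_XYIdeal (W := W) hEqU hEqV (fun h => absurd h.1 hx)
  rw [hslope, haddX, haddY, hline] at hmul
  -- the span of the line function equals the `YIdeal` of the line polynomial
  have h2 : (C 2 * (C (-α / 2) * X + C (-(α ^ 2 / 2))) : ℝ[X]) = C (-α) * X + C (-α ^ 2) := by
    rw [mul_add, ← mul_assoc, ← C_mul, ← C_mul, show (2 : ℝ) * (-α / 2) = -α by ring,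
      show (2 : ℝ) * -(α ^ 2 / 2) = -α ^ 2 by ring]
  have hf : (C (C 2) * (X - C (C (-α / 2) * X + C (-(α ^ 2 / 2)))) : ℝ[X][Y]) =
      C 2 * X + C (C α * X + C (α ^ 2)) := by
    rw [mul_sub, ← C_mul, h2]
    simp only [map_ofNat, C_neg, C_add, C_mul, C_pow]
    ring1
  have hunit : IsUnit (CoordinateRing.mk W (C (C 2)) : W.CoordinateRing) :=
    (isUnit_C.mpr (isUnit_C.mpr (by norm_num : IsUnit (2 : ℝ)))).map (CoordinateRing.mk W)
  have hspan : Ideal.span {CoordinateRing.mk W ((C 2 * X + C (C α * X + C (α ^ 2)) : ℝ[X][Y]))} =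
      YIdeal W (C (-α / 2) * X + C (-(α ^ 2 / 2))) := by
    rw [YIdeal, YClass, ← hf, map_mul]
    exact Ideal.span_singleton_mul_left_unit hunit _
  refine hspan.trans ?_
  -- cancellation of the invertible ideal of the point `P = (α, α)`
  have hcan : ∀ I J : Ideal W.CoordinateRing,
      XYIdeal W α (C α) * I = XYIdeal W α (C α) * J → I = J := by
    intro I J h
    have h' := congrArg
      (fun I : Ideal W.CoordinateRing =>
        (I : FractionalIdeal W.CoordinateRing⁰ W.FunctionField)) h
    simp only [FractionalIdeal.coeIdeal_mul, ← XYIdeal'_eq hP] at h'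
    exact FractionalIdeal.coeIdeal_inj.mp ((XYIdeal' hP).mul_right_inj.mp h')
  refine (hcan _ _ ?_).symm
  calc XYIdeal W α (C α) *
        (XYIdeal W α (C (-α ^ 2)) *
          XYIdeal W (α * (-α + s) / 8) (C (α ^ 2 * (α - 8 - s) / 16)) *
          XYIdeal W (α * (-α - s) / 8) (C (α ^ 2 * (α - 8 + s) / 16)))
      = XYIdeal W α (C α) * XYIdeal W α (C (-α ^ 2)) *
          (XYIdeal W (α * (-α + s) / 8) (C (α ^ 2 * (α - 8 - s) / 16)) *
            XYIdeal W (α * (-α - s) / 8) (C (α ^ 2 * (α - 8 + s) / 16))) := by ring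
    _ = XIdeal W α *
          (XYIdeal W (α * (-α + s) / 8) (C (α ^ 2 * (α - 8 - s) / 16)) *
            XYIdeal W (α * (-α - s) / 8) (C (α ^ 2 * (α - 8 + s) / 16))) := by rw [hneg]
    _ = YIdeal W (C (-α / 2) * X + C (-(α ^ 2 / 2))) * XYIdeal W α (C α) := hmul
    _ = XYIdeal W α (C α) * YIdeal W (C (-α / 2) * X + C (-(α ^ 2 / 2))) := mul_comm _ _
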